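/- arXiv:1711.01707 — 2 statements merged into one kernel-verified Lean document; each statement's English description precedes it below -/
import Mathlib

section
/- Let σ > 0 and let b be a real number with 0 < b < π/(2√σ). Let h : ℝ → ℝ be differentiable on [0,b] with h(0) = 0 and h'(a) ≤ σ + h(a)² for all a ∈ [0,b]. Then h(a) ≤ √σ · tan(√σ · a) for all a ∈ [0,b]. -/
open Real Set

lemma riccati_key (σ b : ℝ) (hσ : 0 < σ) (hb : 0 < b)
    (h h' : ℝ → ℝ)
    (hderiv : ∀ a ∈ Icc (0 : ℝ) b, HasDerivWithinAt h (h' a) (Icc (0 : ℝ) b) a)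
    (h0 : h 0 = 0)
    (hineq : ∀ a ∈ Icc (0 : ℝ) b, h' a ≤ σ + (h a) ^ 2)
    (t : ℝ) (hσt : σ < t) (htb : Real.sqrt t * b < π / 2) :
    ∀ a ∈ Icc (0 : ℝ) b, h a ≤ Real.sqrt t * Real.tan (Real.sqrt t * a) := by
  set s := Real.sqrt t with hs
  have ht0 : 0 < t := hσ.trans hσt
  have hs0 : 0 < s := Real.sqrt_pos.2 ht0
  have hs2 : s ^ 2 = t := Real.sq_sqrt ht0.le
  set B : ℝ → ℝ := fun x => s * Real.tan (s * x) with hB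
  -- cos (s*x) is positive for x ∈ [0, b]
  have hcos : ∀ x ∈ Icc (0 : ℝ) b, 0 < Real.cos (s * x) := by
    intro x hx
    apply Real.cos_pos_of_mem_Ioo
    constructor
    · have : (0:ℝ) ≤ s * x := mul_nonneg hs0.le hx.1
      linarith [Real.pi_pos]
    · calc s * x ≤ s * b := by nlinarith [hx.2]
        _ < π / 2 := htb
  have hBderiv : ∀ x ∈ Icc (0 : ℝ) b, HasDerivAt B (t + (B x) ^ 2) x := by
    intro x hx
    have hc := (hcos x hx).ne'
    have h1 : HasDerivAt (fun y : ℝ => s * y) (s * 1) x := (hasDerivAt_id x).const_mul s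
    have h2 : HasDerivAt (fun y : ℝ => Real.tan (s * y))
        (1 / Real.cos (s * x) ^ 2 * (s * 1)) x :=
      (Real.hasDerivAt_tan hc).comp x h1
    have h3 := h2.const_mul s
    refine HasDerivAt.congr_deriv h3 ?_
    symm
    have hsc : Real.sin (s * x) ^ 2 + Real.cos (s * x) ^ 2 = 1 := Real.sin_sq_add_cos_sq _
    simp only [hB, Real.tan_eq_sin_div_cos]
    field_simp
    nlinarith [hsc, hs2]
  have hcont : ContinuousOn h (Icc (0 : ℝ) b) := fun x hx =>
    (hderiv x hx).continuousWithinAt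
  have hf' : ∀ x ∈ Ico (0 : ℝ) b, HasDerivWithinAt h (h' x) (Ici x) x := by
    intro x hx
    refine (hderiv x ⟨hx.1, hx.2.le⟩).mono_of_mem_nhdsWithin ?_
    exact Icc_mem_nhdsGE_of_mem ⟨hx.1, hx.2⟩
  have ha0 : h 0 ≤ B 0 := by simp [h0, hB]
  have hBcont : ContinuousOn B (Icc (0 : ℝ) b) := fun x hx =>
    (hBderiv x hx).continuousAt.continuousWithinAt
  have hB' : ∀ x ∈ Ico (0 : ℝ) b, HasDerivWithinAt B (t + (B x) ^ 2) (Ici x) x :=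
    fun x hx => (hBderiv x ⟨hx.1, hx.2.le⟩).hasDerivWithinAt
  have bound : ∀ x ∈ Ico (0 : ℝ) b, h x = B x → h' x < t + (B x) ^ 2 := by
    intro x hx heq
    have := hineq x ⟨hx.1, hx.2.le⟩
    rw [heq] at this
    linarith
  exact fun a ha =>
    image_le_of_deriv_right_lt_deriv_boundary' hcont hf' ha0 hBcont hB' bound ha

/-- Riccati-type comparison. If `σ > 0`, `0 < b < π/(2√σ)`,
`h` is differentiable on `[0,b]` with `h 0 = 0` and `h' a ≤ σ + (h a)²` on `[0,b]`,
then `h a ≤ √σ · tan (√σ · a)` on `[0,b]`. -/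
theorem riccati_comparison (σ b : ℝ) (hσ : 0 < σ) (hb : 0 < b)
    (hbπ : b < π / (2 * Real.sqrt σ))
    (h h' : ℝ → ℝ)
    (hderiv : ∀ a ∈ Icc (0 : ℝ) b, HasDerivWithinAt h (h' a) (Icc (0 : ℝ) b) a)
    (h0 : h 0 = 0)
    (hineq : ∀ a ∈ Icc (0 : ℝ) b, h' a ≤ σ + (h a) ^ 2) :
    ∀ a ∈ Icc (0 : ℝ) b, h a ≤ Real.sqrt σ * Real.tan (Real.sqrt σ * a) := by
  intro a ha
  have hsσ : 0 < Real.sqrt σ := Real.sqrt_pos.2 hσ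
  have hσb : Real.sqrt σ * b < π / 2 := by
    rw [lt_div_iff₀ (by positivity : (0:ℝ) < 2 * Real.sqrt σ)] at hbπ
    nlinarith
  set T : ℝ := (π / (2 * b)) ^ 2 with hT
  have hπb : 0 < π / (2 * b) := div_pos Real.pi_pos (by linarith)
  have hσT : σ < T := by
    have h1 : Real.sqrt σ < π / (2 * b) := by
      rw [lt_div_iff₀ (by linarith : (0:ℝ) < 2 * b)]
      nlinarith
    have := Real.sq_sqrt hσ.le
    nlinarith
  -- for each t ∈ (σ, T), h a ≤ √t tan (√t a)
  have key : ∀ t ∈ Ioo σ T, h a ≤ Real.sqrt t * Real.tan (Real.sqrt t * a) := by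
    intro t ht
    have hst : Real.sqrt t * b < π / 2 := by
      have h1 : Real.sqrt t < π / (2 * b) := by
        calc Real.sqrt t < Real.sqrt T := Real.sqrt_lt_sqrt (hσ.le.trans ht.1.le) ht.2
          _ = π / (2 * b) := Real.sqrt_sq hπb.le
      rw [lt_div_iff₀ (by linarith : (0:ℝ) < 2 * b)] at h1
      linarith
    exact riccati_key σ b hσ hb h h' hderiv h0 hineq t ht.1 hst a ha
  -- pass to the limit t → σ⁺
  have hcosσ : Real.cos (Real.sqrt σ * a) ≠ 0 := by
    have : Real.sqrt σ * a < π / 2 := by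
      calc Real.sqrt σ * a ≤ Real.sqrt σ * b := by nlinarith [ha.2]
        _ < π / 2 := hσb
    have h0' : (0:ℝ) ≤ Real.sqrt σ * a := mul_nonneg hsσ.le ha.1
    exact (Real.cos_pos_of_mem_Ioo ⟨by linarith [Real.pi_pos], this⟩).ne'
  have hFcont : ContinuousAt (fun t : ℝ => Real.sqrt t * Real.tan (Real.sqrt t * a)) σ := by
    have hinner : ContinuousAt (fun t : ℝ => Real.sqrt t * a) σ :=
      Real.continuous_sqrt.continuousAt.mul continuousAt_const
    have htan : ContinuousAt Real.tan (Real.sqrt σ * a) := Real.continuousAt_tan.2 hcosσ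
    have h2 : ContinuousAt (fun t : ℝ => Real.tan (Real.sqrt t * a)) σ := ContinuousAt.comp (g := Real.tan) (f := fun t : ℝ => Real.sqrt t * a) (x := σ) htan hinner
    exact Real.continuous_sqrt.continuousAt.mul h2
  have hTend : Filter.Tendsto (fun t : ℝ => Real.sqrt t * Real.tan (Real.sqrt t * a))
      (nhdsWithin σ (Ioi σ)) (nhds (Real.sqrt σ * Real.tan (Real.sqrt σ * a))) :=
    hFcont.tendsto.mono_left nhdsWithin_le_nhds
  exact ge_of_tendsto hTend
    (Filter.eventually_of_mem (Ioo_mem_nhdsGT_of_mem ⟨le_refl σ, hσT⟩) key)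
end

section
/- Let α ∈ (0, 2π) and R > 0. Define for t > 0 the quantity I(t) = (1/(4πt)) · ∫₀^∞ ∫_{−π}^{π} (R + r·cos ψ − r·cos(αψ/(2π)))² dψ · e^{−r²/(4t)} · r dr. Then there exists a constant C > 0 such that for all t ∈ (0,1]: |I(t) − R² + (4R/α)·sin(α/2)·√(πt)| ≤ C·t. -/
open Real MeasureTheory intervalIntegral

/-- The squared transport cost `I(t)` of the explicit coupling on the cone over the circle
of length `α`, between the heat flows started at the vertex and at a point at distance `R`. -/
noncomputable def coneCost (α R t : ℝ) : ℝ :=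
  (1 / (4 * π * t)) *
    ∫ r in Set.Ioi (0 : ℝ),
      (∫ ψ in (-π)..π, (R + r * Real.cos ψ - r * Real.cos (α * ψ / (2 * π))) ^ 2) *
        (Real.exp (-(r ^ 2) / (4 * t)) * r)

namespace ConeAux
open Set

noncomputable def Kc (α : ℝ) : ℝ :=
  ∫ ψ in (-π)..π, (Real.cos ψ - Real.cos (α * ψ / (2 * π))) ^ 2


lemma innerc (α : ℝ) (hα0 : 0 < α) :
    ∫ ψ in (-π)..π, Real.cos (α*ψ/(2*π)) = (4*π/α) * Real.sin (α/2) := by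
  have hπ := Real.pi_pos
  have hc : α/(2*π) ≠ 0 := ne_of_gt (by positivity)
  have : ∀ ψ : ℝ, α*ψ/(2*π) = (α/(2*π))*ψ := fun ψ => by ring
  simp_rw [this]
  rw [integral_comp_mul_left Real.cos hc, integral_cos,
    show (α/(2*π))*π = α/2 by field_simp,
    show (α/(2*π))*(-π) = -(α/2) by field_simp, Real.sin_neg, smul_eq_mul]
  field_simp
  ring

lemma inner_eq (α R : ℝ) (hα0 : 0 < α) (r : ℝ) :
    (∫ ψ in (-π)..π, (R + r * Real.cos ψ - r * Real.cos (α * ψ / (2 * π))) ^ 2)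
      = 2*π*R^2 - ((8*π*R/α) * Real.sin (α/2)) * r
        + (∫ ψ in (-π)..π, (Real.cos ψ - Real.cos (α * ψ / (2 * π))) ^ 2) * r^2 := by
  have h1 : IntervalIntegrable (fun _ : ℝ => R^2) volume (-π) π := intervalIntegrable_const
  have h2 : IntervalIntegrable
      (fun ψ : ℝ => (2*R*r) * (Real.cos ψ - Real.cos (α * ψ / (2 * π)))) volume (-π) π :=
    (Continuous.intervalIntegrable (by fun_prop) _ _)
  have h3 : IntervalIntegrable
      (fun ψ : ℝ => r^2 * (Real.cos ψ - Real.cos (α * ψ / (2 * π)))^2) volume (-π) π :=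
    (Continuous.intervalIntegrable (by fun_prop) _ _)
  have key : (∫ ψ in (-π)..π, (R + r * Real.cos ψ - r * Real.cos (α * ψ / (2 * π))) ^ 2)
      = ∫ ψ in (-π)..π, (R^2 + (2*R*r) * (Real.cos ψ - Real.cos (α * ψ / (2 * π)))
          + r^2 * (Real.cos ψ - Real.cos (α * ψ / (2 * π)))^2) :=
    intervalIntegral.integral_congr (fun ψ _ => by ring)
  rw [key, integral_add (h1.add h2) h3, integral_add h1 h2, intervalIntegral.integral_const,
    intervalIntegral.integral_const_mul, intervalIntegral.integral_const_mul,
    integral_sub (Continuous.intervalIntegrable (by fun_prop) _ _)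
      (Continuous.intervalIntegrable (by fun_prop) _ _),
    integral_cos, innerc α hα0, Real.sin_neg, Real.sin_pi, smul_eq_mul]
  ring

lemma castlt (n : ℕ) : (-1:ℝ) < (n:ℝ) := neg_one_lt_zero.trans_le (Nat.cast_nonneg n)

lemma mom (b : ℝ) (hb : 0 < b) (n : ℕ) :
    ∫ r in Ioi (0:ℝ), r ^ n * Real.exp (-b * r ^ 2) =
      b ^ (-((n:ℝ) + 1) / 2) * (1 / 2) * Real.Gamma (((n:ℝ) + 1) / 2) := by
  rw [← integral_rpow_mul_exp_neg_mul_rpow two_pos (castlt n) hb]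
  refine setIntegral_congr_fun measurableSet_Ioi (fun x hx => ?_)
  rw [show ((2:ℝ) = ((2:ℕ):ℝ)) from by norm_num, Real.rpow_natCast, Real.rpow_natCast]

lemma M1 (t : ℝ) (ht : 0 < t) :
    ∫ r in Ioi (0:ℝ), r ^ 1 * Real.exp (-(4*t)⁻¹ * r ^ 2) = 2 * t := by
  rw [mom _ (by positivity) 1]
  rw [show (-(((1:ℕ):ℝ)+1)/2 : ℝ) = -1 by norm_num, show ((((1:ℕ):ℝ)+1)/2 : ℝ) = 1 by norm_num,
    Real.Gamma_one, Real.rpow_neg_one, inv_inv]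
  ring

lemma M3 (t : ℝ) (ht : 0 < t) :
    ∫ r in Ioi (0:ℝ), r ^ 3 * Real.exp (-(4*t)⁻¹ * r ^ 2) = 8 * t ^ 2 := by
  rw [mom _ (by positivity) 3]
  rw [show (-(((3:ℕ):ℝ)+1)/2 : ℝ) = -2 by norm_num, show ((((3:ℕ):ℝ)+1)/2 : ℝ) = 2 by norm_num]
  rw [show ((2:ℝ) = (1:ℝ)+1) by norm_num, Real.Gamma_add_one one_ne_zero, Real.Gamma_one,
    show ((-((1:ℝ)+1)) = ((-2:ℤ):ℝ)) by norm_num, Real.rpow_intCast,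
    show ((4*t)⁻¹ : ℝ) ^ (-2:ℤ) = (4*t)*(4*t) by rw [zpow_neg, inv_zpow, inv_inv, zpow_two]]
  ring

lemma M2 (t : ℝ) (ht : 0 < t) :
    ∫ r in Ioi (0:ℝ), r ^ 2 * Real.exp (-(4*t)⁻¹ * r ^ 2) = 2 * Real.sqrt π * t * Real.sqrt t := by
  rw [mom _ (by positivity) 2]
  rw [show (-(((2:ℕ):ℝ)+1)/2 : ℝ) = -(3/2) by norm_num, show ((((2:ℕ):ℝ)+1)/2 : ℝ) = (1/2)+1 by norm_num]
  rw [Real.Gamma_add_one (by norm_num), Real.Gamma_one_half_eq]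
  rw [Real.rpow_neg (by positivity), ← Real.inv_rpow (by positivity), inv_inv]
  have h4t : ((4*t) : ℝ) ^ ((3:ℝ)/2) = 8 * (t * Real.sqrt t) := by
    rw [Real.mul_rpow (by norm_num) ht.le]
    have h4 : (4:ℝ) ^ ((3:ℝ)/2) = 8 := by
      rw [show (4:ℝ) = 2^(2:ℕ) by norm_num, ← Real.rpow_natCast 2 2,
        ← Real.rpow_mul (by norm_num), show ((2:ℕ):ℝ) * (3/2) = ((3:ℕ):ℝ) by norm_num,
        Real.rpow_natCast]
      norm_num
    have ht32 : t ^ ((3:ℝ)/2) = t * Real.sqrt t := by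
      rw [show ((3:ℝ)/2 = 1 + 1/2) by norm_num, Real.rpow_add ht, Real.rpow_one,
        ← Real.sqrt_eq_rpow]
    rw [h4, ht32]
  rw [h4t]; ring


lemma momInt (b : ℝ) (hb : 0 < b) (n : ℕ) :
    IntegrableOn (fun r : ℝ => r ^ n * Real.exp (-b * r ^ 2)) (Ioi 0) := by
  refine (integrableOn_rpow_mul_exp_neg_mul_sq hb (s := (n:ℝ)) (castlt n)).congr_fun
    (fun x hx => ?_) measurableSet_Ioi
  dsimp only
  rw [Real.rpow_natCast]

lemma cost_eq (α R t : ℝ) (hα0 : 0 < α) (ht : 0 < t) :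
    coneCost α R t = (1/(4*π*t)) * ((2*π*R^2) * (2*t)
      - ((8*π*R/α) * Real.sin (α/2)) * (2*Real.sqrt π*t*Real.sqrt t)
      + Kc α * (8*t^2)) := by
  have hb : (0:ℝ) < (4*t)⁻¹ := by positivity
  have hsplit : (∫ r in Ioi (0:ℝ),
      (∫ ψ in (-π)..π, (R + r * Real.cos ψ - r * Real.cos (α * ψ / (2 * π))) ^ 2) *
        (Real.exp (-(r ^ 2) / (4 * t)) * r))
      = ∫ r in Ioi (0:ℝ), ((2*π*R^2) * (r^1 * Real.exp (-(4*t)⁻¹ * r^2))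
          + (-((8*π*R/α) * Real.sin (α/2))) * (r^2 * Real.exp (-(4*t)⁻¹ * r^2))
          + Kc α * (r^3 * Real.exp (-(4*t)⁻¹ * r^2))) := by
    refine setIntegral_congr_fun measurableSet_Ioi (fun r _ => ?_)
    rw [inner_eq α R hα0 r, show -(r^2)/(4*t) = -(4*t)⁻¹ * r^2 by ring]
    show _ = _
    unfold Kc
    ring
  have hI1 : Integrable (fun r : ℝ => (2*π*R^2) * (r^1 * Real.exp (-(4*t)⁻¹ * r^2)))
      (volume.restrict (Ioi 0)) := (momInt _ hb 1).const_mul _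
  have hI2 : Integrable
      (fun r : ℝ => (-((8*π*R/α) * Real.sin (α/2))) * (r^2 * Real.exp (-(4*t)⁻¹ * r^2)))
      (volume.restrict (Ioi 0)) := (momInt _ hb 2).const_mul _
  have hI3 : Integrable (fun r : ℝ => Kc α * (r^3 * Real.exp (-(4*t)⁻¹ * r^2)))
      (volume.restrict (Ioi 0)) := (momInt _ hb 3).const_mul _
  have hI12 : Integrable (fun r : ℝ => (2*π*R^2) * (r^1 * Real.exp (-(4*t)⁻¹ * r^2))
      + (-((8*π*R/α) * Real.sin (α/2))) * (r^2 * Real.exp (-(4*t)⁻¹ * r^2)))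
      (volume.restrict (Ioi 0)) := hI1.add hI2
  rw [coneCost, hsplit, integral_add hI12 hI3, integral_add hI1 hI2,
    MeasureTheory.integral_const_mul, MeasureTheory.integral_const_mul,
    MeasureTheory.integral_const_mul,
    M1 t ht, M2 t ht, M3 t ht]
  ring

end ConeAux

theorem coneCost_asymptotics (α R : ℝ)
    (hα : α ∈ Set.Ioo (0 : ℝ) (2 * π)) (hR : 0 < R) :
    ∃ C > (0 : ℝ), ∀ t ∈ Set.Ioc (0 : ℝ) 1,
      |coneCost α R t - R ^ 2 + (4 * R / α) * Real.sin (α / 2) * Real.sqrt (π * t)|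
        ≤ C * t := by
  obtain ⟨hα0, hα2⟩ := hα
  have hπ := Real.pi_pos
  refine ⟨2 * |ConeAux.Kc α| / π + 1, by positivity, fun t ht => ?_⟩
  obtain ⟨ht0, ht1⟩ := ht
  have key : coneCost α R t - R ^ 2 + (4 * R / α) * Real.sin (α / 2) * Real.sqrt (π * t)
      = (2 * ConeAux.Kc α / π) * t := by
    rw [ConeAux.cost_eq α R t hα0 ht0, Real.sqrt_mul hπ.le]
    have hst : Real.sqrt t ≠ 0 := by positivity
    field_simp
    ring
  rw [key, abs_mul, abs_of_pos ht0]
  refine mul_le_mul_of_nonneg_right ?_ ht0.le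
  rw [abs_div, abs_of_pos hπ, abs_mul, abs_two]
  have : (0:ℝ) ≤ 2 * |ConeAux.Kc α| / π := by positivity
  linarith
end
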